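/- Let k be a number field of degree n = [k:ℚ]. There exists a real δ > n with the following property: for every nonzero fractional ideal I of k, every real weight vector x = (x_v)_v indexed by the infinite places of k with ∏_v e^{x_v} = N(I), and every nonzero f ∈ I satisfying Q_x(f) > inf{Q_x(g) : g ∈ I, g ≠ 0}, one has Q_x(f) ≥ δ. -/

import Mathlib

open NumberField Finset
open scoped Classical

variable (k : Type*) [Field k] [NumberField k]

/-- `Q_x(f) = ∑_{v real} |f|_v² e^{-2 x_v} + 2 ∑_{v complex} |f|_v² e^{-x_v}`. -/
noncomputable def arakelovQ (x : InfinitePlace k → ℝ) (f : k) : ℝ :=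
  ∑ v : InfinitePlace k,
    if v.IsReal then (v f) ^ 2 * Real.exp (-2 * x v)
    else 2 * (v f) ^ 2 * Real.exp (-(x v))

/-- The per-place weight entering `arakelovQ`. -/
noncomputable def smgBW (x : InfinitePlace k → ℝ) (v : InfinitePlace k) : ℝ :=
  if v.IsReal then Real.exp (-2 * x v) else Real.exp (-(x v))

variable {k}

lemma smgBW_pos (x : InfinitePlace k → ℝ) (v : InfinitePlace k) : 0 < smgBW k x v := by
  unfold smgBW; split <;> exact Real.exp_pos _

lemma arakelovQ_eq (x : InfinitePlace k → ℝ) (f : k) :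
    arakelovQ k x f = ∑ v : InfinitePlace k, (v.mult : ℝ) * ((v f) ^ 2 * smgBW k x v) := by
  refine Finset.sum_congr rfl fun v _ => ?_
  by_cases hv : v.IsReal <;> simp [smgBW, InfinitePlace.mult, hv] <;> ring

lemma smgBW_prod (x : InfinitePlace k → ℝ) :
    ∏ v : InfinitePlace k, (smgBW k x v) ^ (v.mult) =
      ((∏ v : InfinitePlace k, Real.exp (x v)) ^ 2)⁻¹ := by
  rw [← Finset.prod_pow, ← Finset.prod_inv_distrib]
  refine Finset.prod_congr rfl fun v _ => ?_
  by_cases hv : v.IsReal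
  · simp only [smgBW, InfinitePlace.mult, hv, if_true, pow_one]
    rw [show (-2 : ℝ) * x v = -(x v + x v) by ring, Real.exp_neg, Real.exp_add, sq]
  · simp only [smgBW, InfinitePlace.mult, hv, if_false]
    rw [Real.exp_neg, inv_pow]

lemma smgA_prod (x : InfinitePlace k → ℝ) (h : k) :
    ∏ v : InfinitePlace k, ((v h) ^ 2 * smgBW k x v) ^ (v.mult) =
      ((|Algebra.norm ℚ h| : ℚ) : ℝ) ^ 2 *
        ((∏ v : InfinitePlace k, Real.exp (x v)) ^ 2)⁻¹ := by
  simp_rw [mul_pow]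
  rw [Finset.prod_mul_distrib, smgBW_prod]
  congr 1
  rw [← InfinitePlace.prod_eq_abs_norm, ← Finset.prod_pow]
  exact Finset.prod_congr rfl fun v _ => pow_right_comm _ _ _

lemma smg_norm_ratio {I : FractionalIdeal (nonZeroDivisors (𝓞 k)) k} (hI : I ≠ 0) {h : k}
    (hmem : h ∈ I) (hne : h ≠ 0) :
    ∃ m : ℕ, 1 ≤ m ∧ |(Algebra.norm ℚ h : ℚ)| = FractionalIdeal.absNorm I * m ∧
      (m = 1 → FractionalIdeal.spanSingleton (nonZeroDivisors (𝓞 k)) h = I) := by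
  set Sp := FractionalIdeal.spanSingleton (nonZeroDivisors (𝓞 k)) h with hSp
  have hsle : Sp ≤ I := FractionalIdeal.spanSingleton_le_iff_mem.mpr hmem
  have hSp0 : Sp ≠ 0 := by
    simpa [hSp, FractionalIdeal.spanSingleton_eq_zero_iff] using hne
  have hJle : I⁻¹ * Sp ≤ 1 := by
    calc I⁻¹ * Sp ≤ I⁻¹ * I := mul_le_mul_right hsle _
    _ = 1 := by rw [mul_comm]; exact mul_inv_cancel₀ hI
  obtain ⟨J₀, hJ₀⟩ := FractionalIdeal.le_one_iff_exists_coeIdeal.mp hJle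
  have hJne : (J₀ : FractionalIdeal (nonZeroDivisors (𝓞 k)) k) ≠ 0 := by
    rw [hJ₀]; exact mul_ne_zero (inv_ne_zero hI) hSp0
  have hm0 : Ideal.absNorm J₀ ≠ 0 := by
    rw [ne_eq, Ideal.absNorm_eq_zero_iff]
    intro hb
    exact hJne (by rw [hb, FractionalIdeal.coeIdeal_bot])
  have hNI0 : FractionalIdeal.absNorm I ≠ 0 := fun hc =>
    hI (FractionalIdeal.absNorm_eq_zero_iff.mp hc)
  have hnorm : (Ideal.absNorm J₀ : ℚ) =
      (FractionalIdeal.absNorm I)⁻¹ * |(Algebra.norm ℚ h : ℚ)| := by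
    rw [← FractionalIdeal.coeIdeal_absNorm (K := k), hJ₀, map_mul, map_inv₀,
      FractionalIdeal.absNorm_span_singleton (𝓞 k) h]
  refine ⟨Ideal.absNorm J₀, Nat.one_le_iff_ne_zero.mpr hm0, ?_, fun hm1 => ?_⟩
  · rw [hnorm]; field_simp
  · have h1 : (J₀ : FractionalIdeal (nonZeroDivisors (𝓞 k)) k) = 1 := by
      rw [Ideal.absNorm_eq_one_iff.mp hm1, FractionalIdeal.coeIdeal_top]
    rw [h1] at hJ₀
    calc Sp = (I * I⁻¹) * Sp := by rw [mul_inv_cancel₀ hI, one_mul]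
    _ = I * (I⁻¹ * Sp) := mul_assoc _ _ _
    _ = I := by rw [← hJ₀, mul_one]

set_option maxHeartbeats 1000000 in
/-- Key lemma: near-minimal vectors generate the ideal and have balanced coordinates. -/
lemma smg_key {I : FractionalIdeal (nonZeroDivisors (𝓞 k)) k} (hI : I ≠ 0)
    {x : InfinitePlace k → ℝ}
    (hx : ∏ v : InfinitePlace k, Real.exp (x v) = (FractionalIdeal.absNorm I : ℝ))
    {c : ℝ} (hc0 : 0 < c) (hc1 : c ≤ 1 / 3)
    {h : k} (hmem : h ∈ I) (hne : h ≠ 0)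
    (hQ : arakelovQ k x h < (Module.finrank ℚ k : ℝ) + c ^ 2) :
    FractionalIdeal.spanSingleton (nonZeroDivisors (𝓞 k)) h = I ∧
      ∀ v : InfinitePlace k, |v h * Real.sqrt (smgBW k x v) - 1| ≤ c := by
  classical
  set n : ℕ := Module.finrank ℚ k with hn
  have npos : 0 < n := Module.finrank_pos
  have hnR : (0 : ℝ) < n := by exact_mod_cast npos
  set a : InfinitePlace k → ℝ := fun v => (v h) ^ 2 * smgBW k x v with ha
  have apos : ∀ v, 0 < a v := fun v =>
    mul_pos (pow_pos (InfinitePlace.pos_iff.mpr hne) 2) (smgBW_pos x v)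
  set Q := arakelovQ k x h with hQdef
  have hQa : Q = ∑ v, (v.mult : ℝ) * a v := arakelovQ_eq x h
  have Qpos : 0 < Q := by
    rw [hQa]
    refine Finset.sum_pos (fun v _ => mul_pos ?_ (apos v)) univ_nonempty
    exact_mod_cast InfinitePlace.mult_pos
  obtain ⟨m, hm1, hmeq, hmspan⟩ := smg_norm_ratio hI hmem hne
  have hNIpos : (0 : ℝ) < (FractionalIdeal.absNorm I : ℝ) := by
    rw [← hx]; exact Finset.prod_pos fun v _ => Real.exp_pos _
  have hmR : ((|Algebra.norm ℚ h| : ℚ) : ℝ) = (FractionalIdeal.absNorm I : ℝ) * m := by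
    exact_mod_cast hmeq
  have hP : ∏ v, a v ^ v.mult = (m : ℝ) ^ 2 := by
    simp only [ha]
    rw [smgA_prod x h, hx, hmR]
    field_simp
  -- AM-GM
  have hsummult : ∑ v : InfinitePlace k, (v.mult : ℝ) = (n : ℝ) := by
    rw [hn]
    exact_mod_cast InfinitePlace.sum_mult_eq (K := k)
  have hw1 : ∑ v : InfinitePlace k, ((v.mult : ℝ) / n) = 1 := by
    rw [← Finset.sum_div, hsummult, div_self (ne_of_gt hnR)]
  have hgm : ∏ v, (a v) ^ ((v.mult : ℝ) / n) ≤ ∑ v, ((v.mult : ℝ) / n) * a v :=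
    Real.geom_mean_le_arith_mean_weighted _ _ _ (fun i _ => by positivity) hw1
      (fun i _ => (apos i).le)
  have hsQ : ∑ v, ((v.mult : ℝ) / n) * a v = Q / n := by
    rw [hQa, Finset.sum_div]
    exact Finset.sum_congr rfl fun v _ => by ring
  have hGpow : (∏ v, (a v) ^ ((v.mult : ℝ) / n)) ^ n = ∏ v, a v ^ v.mult := by
    rw [← Finset.prod_pow]
    refine Finset.prod_congr rfl fun v _ => ?_
    rw [← Real.rpow_natCast ((a v) ^ ((v.mult : ℝ) / n)) n, ← Real.rpow_natCast (a v) v.mult,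
      ← Real.rpow_mul (apos v).le, div_mul_cancel₀ _ (ne_of_gt hnR)]
  have hPle : (m : ℝ) ^ 2 ≤ (Q / n) ^ n := by
    rw [← hP, ← hGpow]
    exact pow_le_pow_left₀ (Finset.prod_nonneg fun v _ => Real.rpow_nonneg (apos v).le _)
      (hsQ ▸ hgm) n
  have hQn : Q / n ≤ 1 + c ^ 2 / n := by
    rw [div_le_iff₀ hnR]
    have hdm : c ^ 2 / n * n = c ^ 2 := div_mul_cancel₀ _ (ne_of_gt hnR)
    nlinarith [hQ.le]
  have h2 : (Q / n) ^ n < 2 := by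
    have hc2 : c ^ 2 ≤ 1 / 9 := by nlinarith
    calc (Q / n) ^ n ≤ (1 + c ^ 2 / n) ^ n :=
          pow_le_pow_left₀ (le_of_lt (div_pos Qpos hnR)) hQn n
    _ ≤ (Real.exp (c ^ 2 / n)) ^ n := by
          refine pow_le_pow_left₀ (by positivity) ?_ n
          linarith [Real.add_one_le_exp (c ^ 2 / n)]
    _ = Real.exp (c ^ 2) := by
          rw [← Real.exp_nat_mul]
          congr 1
          field_simp
    _ ≤ Real.exp (1 / 9) := Real.exp_le_exp.mpr hc2
    _ < 2 := by
          rw [← Real.exp_log (by norm_num : (0:ℝ) < 2)]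
          exact Real.exp_lt_exp.mpr (by linarith [Real.log_two_gt_d9])
  have hm2 : (m : ℝ) ^ 2 < 2 := lt_of_le_of_lt hPle h2
  have hmeq1 : m = 1 := by
    by_contra hm
    have h2m : 2 ≤ m := by omega
    have : (2 : ℝ) ≤ m := by exact_mod_cast h2m
    nlinarith
  refine ⟨hmspan hmeq1, fun v0 => ?_⟩
  -- entropy estimate
  have hP1 : ∏ v, a v ^ v.mult = 1 := by rw [hP, hmeq1]; norm_num
  have hlogsum : ∑ v, (v.mult : ℝ) * Real.log (a v) = 0 := by
    have hl := congrArg Real.log hP1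
    rw [Real.log_prod (fun v _ => pow_ne_zero _ (ne_of_gt (apos v))), Real.log_one] at hl
    simpa [Real.log_pow] using hl
  have hsum_ent : ∑ v, (v.mult : ℝ) * (a v - 1 - Real.log (a v)) = Q - n := by
    have hexp : ∀ v ∈ univ, (v.mult : ℝ) * (a v - 1 - Real.log (a v)) =
        (v.mult : ℝ) * a v - (v.mult : ℝ) - (v.mult : ℝ) * Real.log (a v) :=
      fun v _ => by ring
    rw [Finset.sum_congr rfl hexp, Finset.sum_sub_distrib, Finset.sum_sub_distrib,
      hsummult, hlogsum, ← hQa]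
    ring
  have hent_nonneg : ∀ v ∈ univ, 0 ≤ (v.mult : ℝ) * (a v - 1 - Real.log (a v)) := fun v _ =>
    mul_nonneg (Nat.cast_nonneg _) (by linarith [Real.log_le_sub_one_of_pos (apos v)])
  have hsingle : (v0.mult : ℝ) * (a v0 - 1 - Real.log (a v0)) ≤ Q - n :=
    hsum_ent ▸ Finset.single_le_sum hent_nonneg (mem_univ v0)
  have hφ : a v0 - 1 - Real.log (a v0) ≤ c ^ 2 := by
    have h1m : (1 : ℝ) ≤ v0.mult := InfinitePlace.one_le_mult
    have h0 : 0 ≤ a v0 - 1 - Real.log (a v0) := by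
      linarith [Real.log_le_sub_one_of_pos (apos v0)]
    nlinarith [hQ]
  have hsq : (Real.sqrt (a v0) - 1) ^ 2 ≤ c ^ 2 := by
    have hss := Real.sq_sqrt (apos v0).le
    have hlog2 : Real.log (a v0) ≤ 2 * (Real.sqrt (a v0) - 1) := by
      have h1 := Real.log_le_sub_one_of_pos (Real.sqrt_pos.mpr (apos v0))
      have h2 : Real.log (Real.sqrt (a v0)) = Real.log (a v0) / 2 :=
        Real.log_sqrt (apos v0).le
      linarith
    nlinarith
  have habs : |Real.sqrt (a v0) - 1| ≤ c := by
    rw [← Real.sqrt_sq_eq_abs]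
    calc Real.sqrt ((Real.sqrt (a v0) - 1) ^ 2) ≤ Real.sqrt (c ^ 2) := Real.sqrt_le_sqrt hsq
    _ = c := Real.sqrt_sq hc0.le
  have hsqa : Real.sqrt (a v0) = v0 h * Real.sqrt (smgBW k x v0) := by
    rw [ha]
    simp only
    rw [Real.sqrt_mul (sq_nonneg _), Real.sqrt_sq (apply_nonneg v0 h)]
  rwa [hsqa] at habs

set_option maxHeartbeats 1000000 in
theorem second_minimum_uniform_gap :
    ∃ δ : ℝ, (Module.finrank ℚ k : ℝ) < δ ∧
      ∀ I : FractionalIdeal (nonZeroDivisors (𝓞 k)) k, I ≠ 0 →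
      ∀ x : InfinitePlace k → ℝ,
        (∏ v : InfinitePlace k, Real.exp (x v) = (FractionalIdeal.absNorm I : ℝ)) →
      ∀ f : k, f ∈ I → f ≠ 0 →
        sInf {r : ℝ | ∃ g : k, g ∈ I ∧ g ≠ 0 ∧ arakelovQ k x g = r} < arakelovQ k x f →
        δ ≤ arakelovQ k x f := by
  classical
  set n : ℕ := Module.finrank ℚ k with hn
  set G : Set k := {y : k | IsIntegral ℤ y ∧ (∀ φ : k →+* ℂ, ‖φ y‖ ≤ 2) ∧
    ∃ v : InfinitePlace k, v y ≠ 1} with hG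
  have hGfin : G.Finite :=
    (Embeddings.finite_of_norm_le k ℂ 2).subset fun y hy => ⟨hy.1, hy.2.1⟩
  set GF := hGfin.toFinset with hGF
  set d : k → ℝ :=
    fun y => Finset.univ.sup' Finset.univ_nonempty (fun v : InfinitePlace k => |v y - 1|) with hd
  set δ0 : ℝ := if hne : GF.Nonempty then GF.inf' hne d else 1 with hδ0
  have hδ0pos : 0 < δ0 := by
    rw [hδ0]
    split_ifs with hne
    · rw [Finset.lt_inf'_iff]
      intro y hy
      rw [hGF, Set.Finite.mem_toFinset] at hy
      obtain ⟨_, _, v, hv⟩ := hy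
      simp only [hd]
      exact lt_of_lt_of_le (abs_pos.mpr (sub_ne_zero.mpr hv))
        (Finset.le_sup' (fun v : InfinitePlace k => |v y - 1|) (mem_univ v))
    · norm_num
  set c : ℝ := min (1 / 3) (δ0 / 8) with hcdef
  have hc0 : 0 < c := lt_min (by norm_num) (by linarith)
  have hc13 : c ≤ 1 / 3 := min_le_left _ _
  have hcδ : c ≤ δ0 / 8 := min_le_right _ _
  refine ⟨(n : ℝ) + c ^ 2, by nlinarith, ?_⟩
  intro I hI x hx f hfI hf0 hinf
  by_contra hcon
  push_neg at hcon
  have hSne : {r : ℝ | ∃ g : k, g ∈ I ∧ g ≠ 0 ∧ arakelovQ k x g = r}.Nonempty :=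
    ⟨arakelovQ k x f, ⟨f, hfI, hf0, rfl⟩⟩
  obtain ⟨r, hrS, hrlt⟩ := exists_lt_of_csInf_lt hSne hinf
  obtain ⟨g, hgI, hg0, rfl⟩ := hrS
  obtain ⟨hspanf, hAf⟩ := smg_key hI hx hc0 hc13 hfI hf0 hcon
  obtain ⟨hspang, hAg⟩ := smg_key hI hx hc0 hc13 hgI hg0 (lt_trans hrlt hcon)
  set u : k := f / g with hu
  have hu0 : u ≠ 0 := div_ne_zero hf0 hg0
  have hug : u * g = f := div_mul_cancel₀ f hg0
  have hspanu : FractionalIdeal.spanSingleton (nonZeroDivisors (𝓞 k)) u = 1 := by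
    have hmul : FractionalIdeal.spanSingleton (nonZeroDivisors (𝓞 k)) u *
        FractionalIdeal.spanSingleton (nonZeroDivisors (𝓞 k)) g =
        1 * FractionalIdeal.spanSingleton (nonZeroDivisors (𝓞 k)) g := by
      rw [FractionalIdeal.spanSingleton_mul_spanSingleton, hug, one_mul, hspanf, ← hspang]
    have hg0' : FractionalIdeal.spanSingleton (nonZeroDivisors (𝓞 k)) g ≠ 0 := by
      simpa [FractionalIdeal.spanSingleton_eq_zero_iff] using hg0
    exact mul_right_cancel₀ hg0' hmul
  have hint : IsIntegral ℤ u := by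
    have hmem1 : u ∈ (1 : FractionalIdeal (nonZeroDivisors (𝓞 k)) k) := by
      rw [← hspanu]; exact FractionalIdeal.mem_spanSingleton_self _ u
    obtain ⟨w, hw⟩ := (FractionalIdeal.mem_one_iff _).mp hmem1
    rw [← hw]
    exact RingOfIntegers.isIntegral_coe w
  have hvu : ∀ v : InfinitePlace k, |v u - 1| ≤ 3 * c ∧ v u ≤ 2 := by
    intro v
    have hb : 0 < Real.sqrt (smgBW k x v) := Real.sqrt_pos.mpr (smgBW_pos x v)
    have hvg : 0 < v g := InfinitePlace.pos_iff.mpr hg0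
    have hvu0 : 0 ≤ v u := apply_nonneg v u
    have hAf' := abs_le.mp (hAf v)
    have hAg' := abs_le.mp (hAg v)
    have huB : v u * (v g * Real.sqrt (smgBW k x v)) = v f * Real.sqrt (smgBW k x v) := by
      rw [← mul_assoc]
      congr 1
      rw [hu, map_div₀, div_mul_cancel₀ _ (ne_of_gt hvg)]
    obtain ⟨hf1, hf2⟩ := hAf'
    obtain ⟨hg1, hg2⟩ := hAg'
    have hBpos : 0 < v g * Real.sqrt (smgBW k x v) := mul_pos hvg hb
    constructor
    · rw [abs_le]
      constructor <;> nlinarith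
    · nlinarith
  have hall1 : ∀ v : InfinitePlace k, v u = 1 := by
    by_contra hvne
    push_neg at hvne
    have huG : u ∈ G := by
      refine ⟨hint, fun φ => ?_, hvne⟩
      have hφ : ‖φ u‖ = (InfinitePlace.mk φ) u := by
        rw [InfinitePlace.apply]
      rw [hφ]
      exact (hvu _).2
    have huGF : u ∈ GF := by rw [hGF, Set.Finite.mem_toFinset]; exact huG
    have hGFne : GF.Nonempty := ⟨u, huGF⟩
    have hδ0le : δ0 ≤ d u := by
      rw [hδ0, dif_pos hGFne]; exact Finset.inf'_le _ huGF
    have hdle : d u ≤ 3 * c := by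
      simp only [hd]
      exact Finset.sup'_le _ _ fun v _ => (hvu v).1
    linarith
  have hfg : ∀ v : InfinitePlace k, v f = v g := fun v => by
    rw [← hug, map_mul, hall1 v, one_mul]
  have hQeq : arakelovQ k x f = arakelovQ k x g := by
    unfold arakelovQ
    exact Finset.sum_congr rfl fun v _ => by rw [hfg v]
  linarith
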